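/- The polynomial P_d(t) = ∏_{j=1}^d (t - (2j-1)) - 1 has integer coefficients and is irreducible over the rationals. -/

import Mathlib

open Polynomial

lemma aux_monic (d : ℕ) :
    (∏ j ∈ Finset.range d, (X - C ((2 * (j : ℤ) + 1)))).Monic :=
  monic_prod_of_monic _ _ fun _ _ => monic_X_sub_C _

lemma aux_natDegree (d : ℕ) :
    (∏ j ∈ Finset.range d, (X - C ((2 * (j : ℤ) + 1)))).natDegree = d := by
  rw [natDegree_prod_of_monic _ _ (fun i _ => monic_X_sub_C _)]
  simp only [natDegree_X_sub_C]
  simp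

lemma P_monic (d : ℕ) (hd : 1 ≤ d) :
    ((∏ j ∈ Finset.range d, (X - C ((2 * (j : ℤ) + 1)))) - 1).Monic := by
  apply (aux_monic d).sub_of_left
  rw [degree_eq_natDegree (aux_monic d).ne_zero, aux_natDegree]
  calc degree (1 : ℤ[X]) ≤ 0 := degree_one_le
    _ < (d : WithBot ℕ) := by exact_mod_cast hd

lemma P_natDegree (d : ℕ) (hd : 1 ≤ d) :
    ((∏ j ∈ Finset.range d, (X - C ((2 * (j : ℤ) + 1)))) - 1).natDegree = d := by
  rw [natDegree_sub_eq_left_of_natDegree_lt, aux_natDegree]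
  rw [aux_natDegree]
  calc (1 : ℤ[X]).natDegree = 0 := natDegree_one
    _ < d := hd

lemma P_eval (d : ℕ) (j : ℕ) (hj : j ∈ Finset.range d) :
    ((∏ j ∈ Finset.range d, (X - C ((2 * (j : ℤ) + 1)))) - 1).eval (2 * (j : ℤ) + 1) = -1 := by
  rw [eval_sub, eval_prod, Finset.prod_eq_zero hj]
  · simp
  · simp

lemma P_irred_int (d : ℕ) (hd : 1 ≤ d) :
    Irreducible ((∏ j ∈ Finset.range d, (X - C ((2 * (j : ℤ) + 1)))) - 1) := by
  set P : ℤ[X] := (∏ j ∈ Finset.range d, (X - C ((2 * (j : ℤ) + 1)))) - 1 with hP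
  have hPm : P.Monic := P_monic d hd
  have hPdeg : P.natDegree = d := P_natDegree d hd
  constructor
  · exact not_isUnit_of_natDegree_pos P (by omega)
  · rintro G H hGH
    by_contra hcon
    push_neg at hcon
    obtain ⟨hG, hH⟩ := hcon
    have hG0 : G ≠ 0 := by rintro rfl; rw [zero_mul] at hGH; exact hPm.ne_zero hGH
    have hH0 : H ≠ 0 := by rintro rfl; rw [mul_zero] at hGH; exact hPm.ne_zero hGH
    have hlc : G.leadingCoeff * H.leadingCoeff = 1 := by
      have h1 := hPm.leadingCoeff
      rw [hGH, leadingCoeff_mul] at h1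
      exact h1
    have hdeg : G.natDegree + H.natDegree = d := by
      have h2 := natDegree_mul hG0 hH0
      rw [← hGH, hPdeg] at h2
      omega
    have hunit : ∀ Q : ℤ[X], Q.natDegree = 0 → IsUnit Q.leadingCoeff → IsUnit Q := by
      intro Q h hu
      rw [Polynomial.eq_C_of_natDegree_eq_zero h]
      exact isUnit_C.mpr (by rwa [leadingCoeff, h] at hu)
    have hGdeg : 0 < G.natDegree := by
      rcases Nat.eq_zero_or_pos G.natDegree with h | h
      · exact absurd (hunit G h (IsUnit.of_mul_eq_one _ hlc)) hG
      · exact h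
    have hHdeg : 0 < H.natDegree := by
      rcases Nat.eq_zero_or_pos H.natDegree with h | h
      · exact absurd (hunit H h (IsUnit.of_mul_eq_one _ (by rw [mul_comm]; exact hlc))) hH
      · exact h
    -- G + H vanishes at all the d points 2j+1
    have hev : ∀ i : Fin d, (G + H).eval (2 * (i : ℤ) + 1) = 0 := by
      intro i
      have h2 : G.eval (2 * (i : ℤ) + 1) * H.eval (2 * (i : ℤ) + 1) = -1 := by
        rw [← eval_mul, ← hGH]
        exact P_eval d i (Finset.mem_range.mpr i.isLt)
      have h3 : G.eval (2 * (i : ℤ) + 1) * (-(H.eval (2 * (i : ℤ) + 1))) = 1 := by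
        rw [mul_neg, h2]; norm_num
      rcases Int.mul_eq_one_iff_eq_one_or_neg_one.mp h3 with ⟨ha, hb⟩ | ⟨ha, hb⟩ <;>
        simp only [eval_add] <;> omega
    have hQ : G + H = 0 := by
      apply eq_zero_of_natDegree_lt_card_of_eval_eq_zero (G + H)
        (f := fun i : Fin d => 2 * (i : ℤ) + 1)
      · intro a b hab
        simp only at hab
        have : (a : ℤ) = b := by omega
        exact_mod_cast Fin.val_injective (by exact_mod_cast this)
      · exact hev
      · rw [Fintype.card_fin]
        exact (natDegree_add_le G H).trans_lt (by omega)
    have hHG : H = -G := by linear_combination hQ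
    have hfin := hPm.leadingCoeff
    rw [hGH, hHG, leadingCoeff_mul, leadingCoeff_neg] at hfin
    nlinarith [sq_nonneg G.leadingCoeff]

theorem stmt_0 (d : ℕ) (hd : 1 ≤ d) :
    Irreducible
      (((∏ j ∈ Finset.range d, (X - C ((2 * (j : ℤ) + 1)))) - 1).map
        (Int.castRingHom ℚ)) := by
  exact (IsPrimitive.Int.irreducible_iff_irreducible_map_cast
    (P_monic d hd).isPrimitive).mp (P_irred_int d hd)
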